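/- In the discrete Dynkin game with payoff D(σ,τ) = E[ γ₋(t_σ)·1{σ ≤ τ, σ < M} − γ₊(t_τ)·1{τ < σ} + Γ·1{σ = τ = M} ], the pair (σ*, τ*) of first hitting times of the barriers by the recursively defined value V̂ is a saddle point, and V̂_0 = D(σ*, τ*). -/

import Mathlib

open MeasureTheory

section Aux
variable {Ω : Type*} {m0 : MeasurableSpace Ω}

lemma dg_tele (f : ℕ → Ω → ℝ) (ρ : Ω → ℕ) (M : ℕ) (ω : Ω) (h : ρ ω ≤ M) :
    f (ρ ω) ω = f 0 ω + ∑ m ∈ Finset.range M, (if m < ρ ω then f (m+1) ω - f m ω else 0) := by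
  have h1 : ∑ m ∈ Finset.range M, (if m < ρ ω then f (m+1) ω - f m ω else 0)
      = ∑ m ∈ Finset.range (ρ ω), (f (m+1) ω - f m ω) := by
    rw [← Finset.sum_subset (Finset.range_subset_range.mpr h) (fun x _ hx' => by
      rw [if_neg]; simpa using hx')]
    exact Finset.sum_congr rfl fun x hx => if_pos (Finset.mem_range.mp hx)
  rw [h1, Finset.sum_range_sub (fun m => f m ω)]; ring

lemma dg_meas_eq_of_lt {ρ : Ω → ℕ} (h : ∀ m, MeasurableSet {ω | m < ρ ω}) (m : ℕ) :
    MeasurableSet {ω | ρ ω = m} := by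
  cases m with
  | zero =>
    have : {ω | ρ ω = 0} = {ω | 0 < ρ ω}ᶜ := by
      ext ω; simp only [Set.mem_setOf_eq, Set.mem_compl_iff, not_lt]; omega
    rw [this]; exact (h 0).compl
  | succ k =>
    have : {ω | ρ ω = k+1} = {ω | k < ρ ω} ∩ ({ω | k+1 < ρ ω})ᶜ := by
      ext ω
      simp only [Set.mem_setOf_eq, Set.mem_inter_iff, Set.mem_compl_iff, not_lt]; omega
    rw [this]; exact (h k).inter (h (k+1)).compl

lemma dg_stopped_integrable {μ : Measure Ω} (f : ℕ → Ω → ℝ) (ρ : Ω → ℕ) (M : ℕ)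
    (h : ∀ ω, ρ ω ≤ M) (hm : ∀ m, MeasurableSet {ω | ρ ω = m})
    (hf : ∀ m, Integrable (f m) μ) :
    Integrable (fun ω => f (ρ ω) ω) μ := by
  have heq : (fun ω => f (ρ ω) ω)
      = fun ω => ∑ m ∈ Finset.range (M+1), ({ω' | ρ ω' = m}).indicator (f m) ω := by
    funext ω
    simp only [Set.indicator_apply, Set.mem_setOf_eq]
    rw [Finset.sum_ite_eq, if_pos (Finset.mem_range.mpr (Nat.lt_succ_of_le (h ω)))]
  rw [heq]
  exact integrable_finset_sum _ fun m _ => (hf m).indicator (hm m)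

lemma dg_key (μ : Measure Ω) [IsProbabilityMeasure μ] (ℱ : Filtration ℕ m0) (M : ℕ)
    (V : ℕ → Ω → ℝ) (hint : ∀ m, Integrable (V m) μ)
    (ρ : Ω → ℕ) (hρ : ∀ ω, ρ ω ≤ M)
    (hA : ∀ m, MeasurableSet[ℱ m] {ω | m < ρ ω}) :
    ∫ ω, V (ρ ω) ω ∂μ = ∫ ω, V 0 ω ∂μ
      + ∑ m ∈ Finset.range M,
          ∫ ω in {ω | m < ρ ω}, ((μ[V (m+1)|ℱ m]) ω - V m ω) ∂μ := by
  have hAm : ∀ m, MeasurableSet {ω | m < ρ ω} := fun m => ℱ.le m _ (hA m)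
  have heq : (fun ω => V (ρ ω) ω) = fun ω => V 0 ω +
      ∑ m ∈ Finset.range M, ({ω' | m < ρ ω'}).indicator (fun ω => V (m+1) ω - V m ω) ω := by
    funext ω
    rw [dg_tele V ρ M ω (hρ ω)]
    congr 1
    exact Finset.sum_congr rfl fun m _ => by
      simp only [Set.indicator_apply, Set.mem_setOf_eq]
  have hsub : ∀ m, Integrable (fun ω => V (m+1) ω - V m ω) μ := fun m =>
    (hint (m+1)).sub (hint m)
  have hind : ∀ m, Integrable
      (({ω' | m < ρ ω'}).indicator (fun ω => V (m+1) ω - V m ω)) μ :=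
    fun m => (hsub m).indicator (hAm m)
  rw [heq, integral_add (hint 0) (integrable_finset_sum _ fun m _ => hind m),
    integral_finset_sum _ fun m _ => hind m]
  congr 1
  refine Finset.sum_congr rfl fun m _ => ?_
  rw [integral_indicator (hAm m),
    integral_sub ((hint (m+1)).integrableOn) ((hint m).integrableOn),
    ← setIntegral_condExp (ℱ.le m) (hint (m+1)) (hA m),
    ← integral_sub (integrable_condExp.integrableOn) ((hint m).integrableOn)]

lemma dg_key_le (μ : Measure Ω) [IsProbabilityMeasure μ] (ℱ : Filtration ℕ m0) (M : ℕ)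
    (V : ℕ → Ω → ℝ) (hint : ∀ m, Integrable (V m) μ)
    (ρ : Ω → ℕ) (hρ : ∀ ω, ρ ω ≤ M)
    (hA : ∀ m, MeasurableSet[ℱ m] {ω | m < ρ ω})
    (hle : ∀ m < M, ∀ᵐ ω ∂μ, m < ρ ω → (μ[V (m+1)|ℱ m]) ω ≤ V m ω) :
    ∫ ω, V (ρ ω) ω ∂μ ≤ ∫ ω, V 0 ω ∂μ := by
  rw [dg_key μ ℱ M V hint ρ hρ hA]
  have h : ∑ m ∈ Finset.range M,
      ∫ ω in {ω | m < ρ ω}, ((μ[V (m+1)|ℱ m]) ω - V m ω) ∂μ ≤ 0 :=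
    Finset.sum_nonpos fun m hm =>
      setIntegral_nonpos_ae (ℱ.le m _ (hA m))
        ((hle m (Finset.mem_range.mp hm)).mono fun ω h hmem => sub_nonpos.mpr (h hmem))
  linarith

lemma dg_key_ge (μ : Measure Ω) [IsProbabilityMeasure μ] (ℱ : Filtration ℕ m0) (M : ℕ)
    (V : ℕ → Ω → ℝ) (hint : ∀ m, Integrable (V m) μ)
    (ρ : Ω → ℕ) (hρ : ∀ ω, ρ ω ≤ M)
    (hA : ∀ m, MeasurableSet[ℱ m] {ω | m < ρ ω})
    (hge : ∀ m < M, ∀ᵐ ω ∂μ, m < ρ ω → V m ω ≤ (μ[V (m+1)|ℱ m]) ω) :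
    ∫ ω, V 0 ω ∂μ ≤ ∫ ω, V (ρ ω) ω ∂μ := by
  rw [dg_key μ ℱ M V hint ρ hρ hA]
  have h : 0 ≤ ∑ m ∈ Finset.range M,
      ∫ ω in {ω | m < ρ ω}, ((μ[V (m+1)|ℱ m]) ω - V m ω) ∂μ :=
    Finset.sum_nonneg fun m hm =>
      setIntegral_nonneg_ae (ℱ.le m _ (hA m))
        ((hge m (Finset.mem_range.mp hm)).mono fun ω h hmem => sub_nonneg.mpr (h hmem))
  linarith

lemma dg_key_eq' (μ : Measure Ω) [IsProbabilityMeasure μ] (ℱ : Filtration ℕ m0) (M : ℕ)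
    (V : ℕ → Ω → ℝ) (hint : ∀ m, Integrable (V m) μ)
    (ρ : Ω → ℕ) (hρ : ∀ ω, ρ ω ≤ M)
    (hA : ∀ m, MeasurableSet[ℱ m] {ω | m < ρ ω})
    (heqm : ∀ m < M, ∀ᵐ ω ∂μ, m < ρ ω → (μ[V (m+1)|ℱ m]) ω = V m ω) :
    ∫ ω, V (ρ ω) ω ∂μ = ∫ ω, V 0 ω ∂μ := by
  rw [dg_key μ ℱ M V hint ρ hρ hA]
  have h : ∀ m ∈ Finset.range M,
      ∫ ω in {ω | m < ρ ω}, ((μ[V (m+1)|ℱ m]) ω - V m ω) ∂μ = 0 := fun m hm => by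
    refine integral_eq_zero_of_ae ?_
    rw [Filter.EventuallyEq, ae_restrict_iff' (ℱ.le m _ (hA m))]
    exact (heqm m (Finset.mem_range.mp hm)).mono fun ω h hmem => by
      simp [sub_eq_zero.mpr (h hmem)]
  rw [Finset.sum_congr rfl h]
  simp

lemma dg_payoff_integrable {μ : Measure Ω} (M : ℕ) (γminus γplus : ℕ → Ω → ℝ) (Γ : Ω → ℝ)
    (hγmint : ∀ m, Integrable (γminus m) μ) (hγpint : ∀ m, Integrable (γplus m) μ)
    (hΓint : Integrable Γ μ) (σ τ : Ω → ℕ)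
    (hσeq : ∀ m, MeasurableSet {ω | σ ω = m}) (hτeq : ∀ m, MeasurableSet {ω | τ ω = m})
    (hσM : ∀ ω, σ ω ≤ M) (hτM : ∀ ω, τ ω ≤ M) :
    Integrable (fun ω => (if σ ω ≤ τ ω ∧ σ ω < M then γminus (σ ω) ω else 0)
      + (if τ ω < σ ω then -γplus (τ ω) ω else 0)
      + (if σ ω = M ∧ τ ω = M then Γ ω else 0)) μ := by
  have hσlt : ∀ m, MeasurableSet {ω | σ ω < m} := fun m => by
    have he : {ω | σ ω < m} = ⋃ j ∈ Finset.range m, {ω | σ ω = j} := by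
      ext ω
      simp only [Set.mem_setOf_eq, Set.mem_iUnion, Finset.mem_range, exists_prop]
      exact ⟨fun h => ⟨σ ω, h, rfl⟩, fun ⟨j, hj, he⟩ => he ▸ hj⟩
    rw [he]
    exact (Finset.range m).measurableSet_biUnion fun j _ => hσeq j
  have hτlt : ∀ m, MeasurableSet {ω | τ ω < m} := fun m => by
    have he : {ω | τ ω < m} = ⋃ j ∈ Finset.range m, {ω | τ ω = j} := by
      ext ω
      simp only [Set.mem_setOf_eq, Set.mem_iUnion, Finset.mem_range, exists_prop]
      exact ⟨fun h => ⟨τ ω, h, rfl⟩, fun ⟨j, hj, he⟩ => he ▸ hj⟩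
    rw [he]
    exact (Finset.range m).measurableSet_biUnion fun j _ => hτeq j
  have hσgt : ∀ m, MeasurableSet {ω | m < σ ω} := fun m => by
    have he : {ω | m < σ ω} = ({ω | σ ω < m+1})ᶜ := by
      ext ω; simp only [Set.mem_compl_iff, Set.mem_setOf_eq, not_lt]; omega
    rw [he]; exact (hσlt (m+1)).compl
  have hτge : ∀ m, MeasurableSet {ω | m ≤ τ ω} := fun m => by
    have he : {ω | m ≤ τ ω} = ({ω | τ ω < m})ᶜ := by
      ext ω; simp only [Set.mem_compl_iff, Set.mem_setOf_eq, not_lt]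
    rw [he]; exact (hτlt m).compl
  have h1 : Integrable (fun ω => if σ ω ≤ τ ω ∧ σ ω < M then γminus (σ ω) ω else 0) μ := by
    have he : (fun ω => if σ ω ≤ τ ω ∧ σ ω < M then γminus (σ ω) ω else 0)
        = fun ω => ∑ m ∈ Finset.range (M+1),
            (({ω' | σ ω' = m} ∩ {ω' | m ≤ τ ω'}) ∩ {_ω | m < M}).indicator (γminus m) ω := by
      funext ω
      simp only [Set.indicator_apply, Set.mem_inter_iff, Set.mem_setOf_eq]
      by_cases h : σ ω ≤ τ ω ∧ σ ω < M
      · rw [if_pos h, Finset.sum_eq_single_of_mem (σ ω)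
          (Finset.mem_range.mpr (Nat.lt_succ_of_le (hσM ω)))]
        · rw [if_pos ⟨⟨rfl, h.1⟩, h.2⟩]
        · intro b _ hb
          exact if_neg fun hc => hb hc.1.1.symm
      · rw [if_neg h, Finset.sum_eq_zero]
        intro m _
        refine if_neg fun hc => h ?_
        rw [hc.1.1]
        exact ⟨hc.1.2, hc.2⟩
    rw [he]
    exact integrable_finset_sum _ fun m _ =>
      (hγmint m).indicator (((hσeq m).inter (hτge m)).inter (MeasurableSet.const _))
  have h2 : Integrable (fun ω => if τ ω < σ ω then -γplus (τ ω) ω else 0) μ := by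
    have he : (fun ω => if τ ω < σ ω then -γplus (τ ω) ω else 0)
        = fun ω => ∑ m ∈ Finset.range (M+1),
            ({ω' | τ ω' = m} ∩ {ω' | m < σ ω'}).indicator (fun ω => -γplus m ω) ω := by
      funext ω
      simp only [Set.indicator_apply, Set.mem_inter_iff, Set.mem_setOf_eq]
      by_cases h : τ ω < σ ω
      · rw [if_pos h, Finset.sum_eq_single_of_mem (τ ω)
          (Finset.mem_range.mpr (Nat.lt_succ_of_le (hτM ω)))]
        · rw [if_pos ⟨rfl, h⟩]
        · intro b _ hb
          exact if_neg fun hc => hb hc.1.symm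
      · rw [if_neg h, Finset.sum_eq_zero]
        intro m _
        refine if_neg fun hc => h ?_
        rw [hc.1]
        exact hc.2
    rw [he]
    exact integrable_finset_sum _ fun m _ =>
      ((hγpint m).neg).indicator ((hτeq m).inter (hσgt m))
  have h3 : Integrable (fun ω => if σ ω = M ∧ τ ω = M then Γ ω else 0) μ := by
    have he : (fun ω => if σ ω = M ∧ τ ω = M then Γ ω else 0)
        = ({ω | σ ω = M} ∩ {ω | τ ω = M}).indicator Γ := by
      funext ω
      simp only [Set.indicator_apply, Set.mem_inter_iff, Set.mem_setOf_eq]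
    rw [he]
    exact hΓint.indicator ((hσeq M).inter (hτeq M))
  exact (h1.add h2).add h3

end Aux

/-- In the discrete Dynkin game, the first hitting times of the barriers by the
recursively defined value `V̂` form a saddle point and `V̂_0` is the value
`D(σ*, τ*)` of the game. -/
theorem discrete_dynkin_game_saddle_point {Ω : Type*} {m0 : MeasurableSpace Ω}
    (μ : Measure Ω) [IsProbabilityMeasure μ] (ℱ : Filtration ℕ m0) (M : ℕ)
    (γminus γplus : ℕ → Ω → ℝ) (V : ℕ → Ω → ℝ) (Γ : Ω → ℝ)
    (hadapted : Adapted ℱ V) (hint : ∀ m, Integrable (V m) μ)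
    (hγm : ∀ m, StronglyMeasurable[ℱ m] (γminus m))
    (hγp : ∀ m, StronglyMeasurable[ℱ m] (γplus m))
    (hγmint : ∀ m, Integrable (γminus m) μ) (hγpint : ∀ m, Integrable (γplus m) μ)
    (htrivial : ℱ 0 = (⊥ : MeasurableSpace Ω))
    (hpos : ∀ m, ∀ᵐ ω ∂μ, 0 < γminus m ω + γplus m ω)
    (hΓint : Integrable Γ μ) (hΓmeas : StronglyMeasurable[ℱ M] Γ)
    (hΓ : ∀ᵐ ω ∂μ, -γplus M ω ≤ Γ ω ∧ Γ ω ≤ γminus M ω)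
    (hterm : V M = Γ)
    (hrec : ∀ m < M, ∀ᵐ ω ∂μ,
      V m ω = min (γminus m ω) (max (-γplus m ω) ((μ[V (m + 1)|ℱ m]) ω)))
    (σs τs : Ω → ℕ)
    (hσs : ∀ ω, σs ω = sInf {m : ℕ | m = M ∨ V m ω = γminus m ω})
    (hτs : ∀ ω, τs ω = sInf {m : ℕ | m = M ∨ V m ω = -γplus m ω})
    (D : (Ω → ℕ) → (Ω → ℕ) → ℝ)
    (hD : ∀ σ τ : Ω → ℕ, D σ τ =
      ∫ ω, ((if σ ω ≤ τ ω ∧ σ ω < M then γminus (σ ω) ω else 0)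
        + (if τ ω < σ ω then -γplus (τ ω) ω else 0)
        + (if σ ω = M ∧ τ ω = M then Γ ω else 0)) ∂μ) :
    (∀ σ τ : Ω → ℕ, IsStoppingTime ℱ (fun ω => (σ ω : WithTop ℕ)) → (∀ ω, σ ω ≤ M) →
        IsStoppingTime ℱ (fun ω => (τ ω : WithTop ℕ)) → (∀ ω, τ ω ≤ M) →
      D σs τ ≤ D σs τs ∧ D σs τs ≤ D σ τs) ∧
    (∀ᵐ ω ∂μ, V 0 ω = D σs τs) := by
  -- basic pointwise facts about σs, τs
  have hσsM : ∀ ω, σs ω ≤ M := fun ω => by rw [hσs]; exact Nat.sInf_le (Or.inl rfl)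
  have hτsM : ∀ ω, τs ω ≤ M := fun ω => by rw [hτs]; exact Nat.sInf_le (Or.inl rfl)
  have hσsmem : ∀ ω, σs ω = M ∨ V (σs ω) ω = γminus (σs ω) ω := fun ω => by
    have h : σs ω ∈ {m : ℕ | m = M ∨ V m ω = γminus m ω} := by
      rw [hσs]; exact Nat.sInf_mem ⟨M, Or.inl rfl⟩
    exact h
  have hτsmem : ∀ ω, τs ω = M ∨ V (τs ω) ω = -γplus (τs ω) ω := fun ω => by
    have h : τs ω ∈ {m : ℕ | m = M ∨ V m ω = -γplus m ω} := by
      rw [hτs]; exact Nat.sInf_mem ⟨M, Or.inl rfl⟩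
    exact h
  have hσslt : ∀ ω m, m < σs ω → m ≠ M ∧ V m ω ≠ γminus m ω := fun ω m hm => by
    have h : m ∉ {m : ℕ | m = M ∨ V m ω = γminus m ω} :=
      Nat.notMem_of_lt_sInf (by rw [← hσs ω]; exact hm)
    exact ⟨fun h1 => h (Or.inl h1), fun h1 => h (Or.inr h1)⟩
  have hτslt : ∀ ω m, m < τs ω → m ≠ M ∧ V m ω ≠ -γplus m ω := fun ω m hm => by
    have h : m ∉ {m : ℕ | m = M ∨ V m ω = -γplus m ω} :=
      Nat.notMem_of_lt_sInf (by rw [← hτs ω]; exact hm)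
    exact ⟨fun h1 => h (Or.inl h1), fun h1 => h (Or.inr h1)⟩
  -- measurability of hitting-time sets
  have hσsgt : ∀ m, MeasurableSet[ℱ m] {ω | m < σs ω} := fun m => by
    have hle : {ω | σs ω ≤ m} = ⋃ j ∈ Finset.range (m+1),
        ({ω | j = M} ∪ {ω | V j ω = γminus j ω}) := by
      ext ω
      simp only [Set.mem_setOf_eq, Set.mem_iUnion, Finset.mem_range, Set.mem_union,
        Nat.lt_succ_iff, exists_prop]
      constructor
      · intro h
        exact ⟨σs ω, h, hσsmem ω⟩
      · rintro ⟨j, hj, hmem⟩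
        have h2 : σs ω ≤ j := by rw [hσs]; exact Nat.sInf_le hmem
        omega
    have hcompl : {ω | m < σs ω} = ({ω | σs ω ≤ m})ᶜ := by
      ext ω; simp only [Set.mem_compl_iff, Set.mem_setOf_eq, not_le]
    rw [hcompl, hle]
    refine (MeasurableSet.biUnion (Finset.range (m+1)).countable_toSet fun j hj => ?_).compl
    have hjm : j ≤ m := Nat.lt_succ_iff.mp (Finset.mem_range.mp (Finset.mem_coe.mp hj))
    refine MeasurableSet.union (MeasurableSet.const _) ?_
    exact measurableSet_eq_fun (((hadapted j).mono (ℱ.mono hjm) le_rfl))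
      (((hγm j).mono (ℱ.mono hjm)).measurable)
  have hτsgt : ∀ m, MeasurableSet[ℱ m] {ω | m < τs ω} := fun m => by
    have hle : {ω | τs ω ≤ m} = ⋃ j ∈ Finset.range (m+1),
        ({ω | j = M} ∪ {ω | V j ω = -γplus j ω}) := by
      ext ω
      simp only [Set.mem_setOf_eq, Set.mem_iUnion, Finset.mem_range, Set.mem_union,
        Nat.lt_succ_iff, exists_prop]
      constructor
      · intro h
        exact ⟨τs ω, h, hτsmem ω⟩
      · rintro ⟨j, hj, hmem⟩
        have h2 : τs ω ≤ j := by rw [hτs]; exact Nat.sInf_le hmem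
        omega
    have hcompl : {ω | m < τs ω} = ({ω | τs ω ≤ m})ᶜ := by
      ext ω; simp only [Set.mem_compl_iff, Set.mem_setOf_eq, not_le]
    rw [hcompl, hle]
    refine (MeasurableSet.biUnion (Finset.range (m+1)).countable_toSet fun j hj => ?_).compl
    have hjm : j ≤ m := Nat.lt_succ_iff.mp (Finset.mem_range.mp (Finset.mem_coe.mp hj))
    refine MeasurableSet.union (MeasurableSet.const _) ?_
    exact measurableSet_eq_fun (((hadapted j).mono (ℱ.mono hjm) le_rfl))
      ((((hγp j).mono (ℱ.mono hjm)).measurable).neg)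
  have hσseq : ∀ m, MeasurableSet {ω | σs ω = m} :=
    dg_meas_eq_of_lt fun m => ℱ.le m _ (hσsgt m)
  have hτseq : ∀ m, MeasurableSet {ω | τs ω = m} :=
    dg_meas_eq_of_lt fun m => ℱ.le m _ (hτsgt m)
  -- the a.e. good set
  have hgood : ∀ᵐ ω ∂μ,
      (∀ m, m < M → V m ω = min (γminus m ω) (max (-γplus m ω) ((μ[V (m+1)|ℱ m]) ω))) ∧
      (∀ m, 0 < γminus m ω + γplus m ω) ∧ (-γplus M ω ≤ Γ ω ∧ Γ ω ≤ γminus M ω) := by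
    refine (ae_all_iff.mpr fun m => ?_).and ((ae_all_iff.mpr hpos).and hΓ)
    by_cases hm : m < M
    · exact (hrec m hm).mono fun ω h _ => h
    · exact Filter.Eventually.of_forall fun ω h' => absurd h' hm
  -- Claim 1 : for every stopping time τ ≤ M, D σs τ ≤ ∫ V 0
  have key1 : ∀ τ : Ω → ℕ, IsStoppingTime ℱ (fun ω => (τ ω : WithTop ℕ)) → (∀ ω, τ ω ≤ M) →
      D σs τ ≤ ∫ ω, V 0 ω ∂μ := by
    intro τ hτST0 hτMle
    have hτST : ∀ m, MeasurableSet[ℱ m] {ω | τ ω ≤ m} := fun m => by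
      simpa using hτST0 m
    set ρ := fun ω => min (σs ω) (τ ω) with hρdef
    have hρM : ∀ ω, ρ ω ≤ M := fun ω => le_trans (min_le_left _ _) (hσsM ω)
    have hAρ : ∀ m, MeasurableSet[ℱ m] {ω | m < ρ ω} := fun m => by
      have he : {ω | m < ρ ω} = {ω | m < σs ω} ∩ ({ω | τ ω ≤ m})ᶜ := by
        ext ω
        simp only [hρdef, Set.mem_inter_iff, Set.mem_setOf_eq, Set.mem_compl_iff, not_le,
          lt_min_iff]
      rw [he]
      exact (hσsgt m).inter (hτST m).compl
    have hstop : ∫ ω, V (ρ ω) ω ∂μ ≤ ∫ ω, V 0 ω ∂μ := by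
      refine dg_key_le μ ℱ M V hint ρ hρM hAρ fun m hm => ?_
      filter_upwards [hgood] with ω hg hlt
      have hσlt : m < σs ω := lt_of_lt_of_le hlt (min_le_left _ _)
      have hne := (hσslt ω m hσlt).2
      have hr := hg.1 m hm
      rcases min_cases (γminus m ω) (max (-γplus m ω) ((μ[V (m+1)|ℱ m]) ω)) with
        ⟨h1, _⟩ | ⟨h1, _⟩
      · exact absurd (hr.trans h1) hne
      · rw [hr, h1]; exact le_max_right _ _
    have hcmp : ∀ᵐ ω ∂μ,
        ((if σs ω ≤ τ ω ∧ σs ω < M then γminus (σs ω) ω else 0)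
          + (if τ ω < σs ω then -γplus (τ ω) ω else 0)
          + (if σs ω = M ∧ τ ω = M then Γ ω else 0)) ≤ V (ρ ω) ω := by
      filter_upwards [hgood] with ω hg
      by_cases h1 : σs ω ≤ τ ω ∧ σs ω < M
      · rw [if_pos h1, if_neg (not_lt.mpr h1.1), if_neg (fun hc => h1.2.ne hc.1)]
        have hVeq : V (σs ω) ω = γminus (σs ω) ω := (hσsmem ω).resolve_left h1.2.ne
        have hρeq : ρ ω = σs ω := min_eq_left h1.1
        rw [hρeq, hVeq]
        simp
      · by_cases h2 : τ ω < σs ω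
        · rw [if_neg h1, if_pos h2,
            if_neg (fun hc => by rw [hc.1, hc.2] at h2; exact lt_irrefl _ h2)]
          have hρeq : ρ ω = τ ω := min_eq_right h2.le
          rw [hρeq]
          by_cases hτlt : τ ω < M
          · have hb := hg.1 (τ ω) hτlt
            have hp := hg.2.1 (τ ω)
            have : -γplus (τ ω) ω ≤ V (τ ω) ω := by
              rw [hb]; exact le_min (by linarith) (le_max_left _ _)
            linarith
          · have hτeqM : τ ω = M := le_antisymm (hτMle ω) (not_lt.mp hτlt)
            rw [hτeqM, hterm]
            have := hg.2.2.1
            linarith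
        · have hσle : σs ω ≤ τ ω := not_lt.mp h2
          have hσM' : σs ω = M := by
            by_contra hne
            exact h1 ⟨hσle, lt_of_le_of_ne (hσsM ω) hne⟩
          have hτM' : τ ω = M := le_antisymm (hτMle ω) (hσM' ▸ hσle)
          rw [if_neg h1, if_neg h2, if_pos ⟨hσM', hτM'⟩]
          have hρeq : ρ ω = M := by simp [hρdef, hσM', hτM']
          rw [hρeq, hterm]
          simp
    have hρeqm : ∀ m, MeasurableSet {ω | ρ ω = m} :=
      dg_meas_eq_of_lt fun m => ℱ.le m _ (hAρ m)
    have hVρint : Integrable (fun ω => V (ρ ω) ω) μ :=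
      dg_stopped_integrable V ρ M hρM hρeqm hint
    have hτeqm : ∀ m, MeasurableSet {ω | τ ω = m} := dg_meas_eq_of_lt fun m => by
      have he : {ω | m < τ ω} = ({ω | τ ω ≤ m})ᶜ := by
        ext ω; simp only [Set.mem_compl_iff, Set.mem_setOf_eq, not_le]
      rw [he]; exact ℱ.le m _ (hτST m).compl
    have hpayint := dg_payoff_integrable M γminus γplus Γ hγmint hγpint hΓint σs τ
      hσseq hτeqm hσsM hτMle
    rw [hD]
    exact le_trans (integral_mono_ae hpayint hVρint hcmp) hstop
  -- Claim 2 : for every stopping time σ ≤ M, ∫ V 0 ≤ D σ τs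
  have key2 : ∀ σ : Ω → ℕ, IsStoppingTime ℱ (fun ω => (σ ω : WithTop ℕ)) → (∀ ω, σ ω ≤ M) →
      ∫ ω, V 0 ω ∂μ ≤ D σ τs := by
    intro σ hσST0 hσMle
    have hσST : ∀ m, MeasurableSet[ℱ m] {ω | σ ω ≤ m} := fun m => by
      simpa using hσST0 m
    set ρ := fun ω => min (σ ω) (τs ω) with hρdef
    have hρM : ∀ ω, ρ ω ≤ M := fun ω => le_trans (min_le_left _ _) (hσMle ω)
    have hAρ : ∀ m, MeasurableSet[ℱ m] {ω | m < ρ ω} := fun m => by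
      have he : {ω | m < ρ ω} = ({ω | σ ω ≤ m})ᶜ ∩ {ω | m < τs ω} := by
        ext ω
        simp only [hρdef, Set.mem_inter_iff, Set.mem_setOf_eq, Set.mem_compl_iff, not_le,
          lt_min_iff]
      rw [he]
      exact (hσST m).compl.inter (hτsgt m)
    have hstop : ∫ ω, V 0 ω ∂μ ≤ ∫ ω, V (ρ ω) ω ∂μ := by
      refine dg_key_ge μ ℱ M V hint ρ hρM hAρ fun m hm => ?_
      filter_upwards [hgood] with ω hg hlt
      have hτlt : m < τs ω := lt_of_lt_of_le hlt (min_le_right _ _)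
      have hne := (hτslt ω m hτlt).2
      have hr := hg.1 m hm
      have hp := hg.2.1 m
      rcases max_cases (-γplus m ω) ((μ[V (m+1)|ℱ m]) ω) with ⟨h1, _⟩ | ⟨h1, _⟩
      · have hmin : min (γminus m ω) (max (-γplus m ω) ((μ[V (m+1)|ℱ m]) ω))
            = -γplus m ω := by
          rw [h1]; exact min_eq_right (by linarith)
        exact absurd (hr.trans hmin) hne
      · rcases min_cases (γminus m ω) (max (-γplus m ω) ((μ[V (m+1)|ℱ m]) ω)) with
          ⟨g1, g2⟩ | ⟨g1, _⟩
        · rw [h1] at g2; rw [hr, g1]; exact g2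
        · rw [hr, g1, h1]
    have hcmp : ∀ᵐ ω ∂μ, V (ρ ω) ω ≤
        ((if σ ω ≤ τs ω ∧ σ ω < M then γminus (σ ω) ω else 0)
          + (if τs ω < σ ω then -γplus (τs ω) ω else 0)
          + (if σ ω = M ∧ τs ω = M then Γ ω else 0)) := by
      filter_upwards [hgood] with ω hg
      by_cases h1 : σ ω ≤ τs ω ∧ σ ω < M
      · rw [if_pos h1, if_neg (not_lt.mpr h1.1), if_neg (fun hc => h1.2.ne hc.1)]
        have hρeq : ρ ω = σ ω := min_eq_left h1.1
        have hub : V (σ ω) ω ≤ γminus (σ ω) ω := by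
          rw [hg.1 (σ ω) h1.2]; exact min_le_left _ _
        rw [hρeq]
        linarith
      · by_cases h2 : τs ω < σ ω
        · rw [if_neg h1, if_pos h2,
            if_neg (fun hc => by rw [hc.1, hc.2] at h2; exact lt_irrefl _ h2)]
          have hτsltM : τs ω < M := lt_of_lt_of_le h2 (hσMle ω)
          have hVeq : V (τs ω) ω = -γplus (τs ω) ω := (hτsmem ω).resolve_left hτsltM.ne
          have hρeq : ρ ω = τs ω := min_eq_right h2.le
          rw [hρeq, hVeq]
          simp
        · have hσle : σ ω ≤ τs ω := not_lt.mp h2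
          have hσM' : σ ω = M := by
            by_contra hne
            exact h1 ⟨hσle, lt_of_le_of_ne (hσMle ω) hne⟩
          have hτM' : τs ω = M := le_antisymm (hτsM ω) (hσM' ▸ hσle)
          rw [if_neg h1, if_neg h2, if_pos ⟨hσM', hτM'⟩]
          have hρeq : ρ ω = M := by simp [hρdef, hσM', hτM']
          rw [hρeq, hterm]
          simp
    have hρeqm : ∀ m, MeasurableSet {ω | ρ ω = m} :=
      dg_meas_eq_of_lt fun m => ℱ.le m _ (hAρ m)
    have hVρint : Integrable (fun ω => V (ρ ω) ω) μ :=
      dg_stopped_integrable V ρ M hρM hρeqm hint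
    have hσeqm : ∀ m, MeasurableSet {ω | σ ω = m} := dg_meas_eq_of_lt fun m => by
      have he : {ω | m < σ ω} = ({ω | σ ω ≤ m})ᶜ := by
        ext ω; simp only [Set.mem_compl_iff, Set.mem_setOf_eq, not_le]
      rw [he]; exact ℱ.le m _ (hσST m).compl
    have hpayint := dg_payoff_integrable M γminus γplus Γ hγmint hγpint hΓint σ τs
      hσeqm hτseq hσMle hτsM
    rw [hD]
    exact le_trans hstop (integral_mono_ae hVρint hpayint hcmp)
  -- Claim 3 : D σs τs = ∫ V 0
  have key3 : D σs τs = ∫ ω, V 0 ω ∂μ := by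
    set ρ := fun ω => min (σs ω) (τs ω) with hρdef
    have hρM : ∀ ω, ρ ω ≤ M := fun ω => le_trans (min_le_left _ _) (hσsM ω)
    have hAρ : ∀ m, MeasurableSet[ℱ m] {ω | m < ρ ω} := fun m => by
      have he : {ω | m < ρ ω} = {ω | m < σs ω} ∩ {ω | m < τs ω} := by
        ext ω
        simp only [hρdef, Set.mem_inter_iff, Set.mem_setOf_eq, lt_min_iff]
      rw [he]
      exact (hσsgt m).inter (hτsgt m)
    have hstop : ∫ ω, V (ρ ω) ω ∂μ = ∫ ω, V 0 ω ∂μ := by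
      refine dg_key_eq' μ ℱ M V hint ρ hρM hAρ fun m hm => ?_
      filter_upwards [hgood] with ω hg hlt
      have hne1 := (hσslt ω m (lt_of_lt_of_le hlt (min_le_left _ _))).2
      have hne2 := (hτslt ω m (lt_of_lt_of_le hlt (min_le_right _ _))).2
      have hr := hg.1 m hm
      have hp := hg.2.1 m
      rcases min_cases (γminus m ω) (max (-γplus m ω) ((μ[V (m+1)|ℱ m]) ω)) with
        ⟨g1, _⟩ | ⟨g1, _⟩
      · exact absurd (hr.trans g1) hne1
      · rcases max_cases (-γplus m ω) ((μ[V (m+1)|ℱ m]) ω) with ⟨h1, _⟩ | ⟨h1, _⟩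
        · have hV := hr.trans g1
          rw [h1] at hV
          exact absurd hV hne2
        · rw [hr, g1, h1]
    have hcmp : ∀ᵐ ω ∂μ,
        ((if σs ω ≤ τs ω ∧ σs ω < M then γminus (σs ω) ω else 0)
          + (if τs ω < σs ω then -γplus (τs ω) ω else 0)
          + (if σs ω = M ∧ τs ω = M then Γ ω else 0)) = V (ρ ω) ω := by
      filter_upwards [hgood] with ω hg
      by_cases h1 : σs ω ≤ τs ω ∧ σs ω < M
      · rw [if_pos h1, if_neg (not_lt.mpr h1.1), if_neg (fun hc => h1.2.ne hc.1)]
        have hVeq : V (σs ω) ω = γminus (σs ω) ω := (hσsmem ω).resolve_left h1.2.ne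
        have hρeq : ρ ω = σs ω := min_eq_left h1.1
        rw [hρeq, hVeq]
        ring
      · by_cases h2 : τs ω < σs ω
        · rw [if_neg h1, if_pos h2,
            if_neg (fun hc => by rw [hc.1, hc.2] at h2; exact lt_irrefl _ h2)]
          have hτsltM : τs ω < M := lt_of_lt_of_le h2 (hσsM ω)
          have hVeq : V (τs ω) ω = -γplus (τs ω) ω := (hτsmem ω).resolve_left hτsltM.ne
          have hρeq : ρ ω = τs ω := min_eq_right h2.le
          rw [hρeq, hVeq]
          ring
        · have hσle : σs ω ≤ τs ω := not_lt.mp h2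
          have hσM' : σs ω = M := by
            by_contra hne
            exact h1 ⟨hσle, lt_of_le_of_ne (hσsM ω) hne⟩
          have hτM' : τs ω = M := le_antisymm (hτsM ω) (hσM' ▸ hσle)
          rw [if_neg h1, if_neg h2, if_pos ⟨hσM', hτM'⟩]
          have hρeq : ρ ω = M := by simp [hρdef, hσM', hτM']
          rw [hρeq, hterm]
          ring
    rw [hD, integral_congr_ae hcmp, hstop]
  refine ⟨fun σ τ hσST hσMle hτST hτMle => ?_, ?_⟩
  · exact ⟨le_trans (key1 τ hτST hτMle) key3.ge, key3.le.trans (key2 σ hσST hσMle)⟩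
  · obtain ⟨c, hc⟩ := stronglyMeasurable_bot_iff.mp
      (Measurable.stronglyMeasurable (htrivial ▸ hadapted 0 : Measurable[⊥] (V 0)))
    have hI : ∫ ω, V 0 ω ∂μ = c := by
      rw [hc]; simp
    refine Filter.Eventually.of_forall fun ω => ?_
    calc V 0 ω = c := by rw [hc]
      _ = ∫ ω, V 0 ω ∂μ := hI.symm
      _ = D σs τs := key3.symm
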